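/- arXiv:1101.3850 — 3 statements merged into one kernel-verified Lean document; each statement's English description precedes it below -/
import Mathlib

section
/- Let σ ≥ 0, d ∈ ℕ, and let f : ℂ → ℂ be entire. Assume f has exponential type at most σ, i.e. there is A > 0 with |f(z)| ≤ A·e^{σ|z|} for all z ∈ ℂ, and that f is polynomially bounded on the real axis: there is C > 0 with |f(x)| ≤ C·(1 + |x|^d) for all x ∈ ℝ. Then there exists a constant C₁ > 0 such that |f(z)| ≤ C₁·(1 + |z|^d)·e^{σ·|Im z|} for all z ∈ ℂ. -/
open Complex Asymptotics Filter

lemma conj_conj_diff {f : ℂ → ℂ} (hf : Differentiable ℂ f) :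
    Differentiable ℂ (fun z => (starRingEnd ℂ) (f ((starRingEnd ℂ) z))) := by
  intro z
  have h := (hf ((starRingEnd ℂ) z)).hasDerivAt
  set c := deriv f ((starRingEnd ℂ) z)
  rw [hasDerivAt_iff_isLittleO] at h
  have hconj : Filter.Tendsto (starRingEnd ℂ) (nhds z) (nhds ((starRingEnd ℂ) z)) :=
    (continuous_conj.tendsto z)
  have h2 := h.comp_tendsto hconj
  have h3 : HasDerivAt (fun w => (starRingEnd ℂ) (f ((starRingEnd ℂ) w))) ((starRingEnd ℂ) c) z := by
    rw [hasDerivAt_iff_isLittleO, ← isLittleO_norm_norm]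
    have h4 := h2.norm_norm
    refine h4.congr' ?_ ?_
    · filter_upwards with w
      simp only [Function.comp]
      rw [← RCLike.norm_conj (f ((starRingEnd ℂ) w) - f ((starRingEnd ℂ) z) - ((starRingEnd ℂ) w - (starRingEnd ℂ) z) • c)]
      congr 1
      simp only [smul_eq_mul, map_sub, map_mul, Complex.conj_conj]
    · filter_upwards with w
      simp only [Function.comp]
      rw [← map_sub, RCLike.norm_conj]
  exact h3.differentiableAt

lemma pow_one_add_le (d : ℕ) {r : ℝ} (hr : 0 ≤ r) : (1 + r) ^ d ≤ 2 ^ d * (1 + r ^ d) := by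
  have h1 : (1 + r) ≤ 2 * max 1 r := by
    rcases le_total r 1 with h | h
    · simp [max_eq_left h]; linarith
    · simp [max_eq_right h]; linarith
  calc (1 + r) ^ d ≤ (2 * max 1 r) ^ d := by
        apply pow_le_pow_left₀ (by linarith) h1
    _ = 2 ^ d * (max 1 r) ^ d := by rw [mul_pow]
    _ ≤ 2 ^ d * (1 + r ^ d) := by
        gcongr
        rcases le_total r 1 with h | h
        · rw [max_eq_left h]; simp
          positivity
        · rw [max_eq_right h]; nlinarith [pow_nonneg hr d]

lemma pl_upper (σ : ℝ) (hσ : 0 ≤ σ) (d : ℕ) (f : ℂ → ℂ) (hf : Differentiable ℂ f)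
    (A : ℝ) (hA : 0 < A) (htype : ∀ z : ℂ, ‖f z‖ ≤ A * Real.exp (σ * ‖z‖))
    (C : ℝ) (hC : 0 < C) (hreal : ∀ x : ℝ, ‖f x‖ ≤ C * (1 + |x| ^ d)) :
    ∀ z : ℂ, 0 ≤ z.im →
      ‖f z‖ ≤ (2 ^ d * (2 * C)) * (1 + ‖z‖ ^ d) * Real.exp (σ * z.im) := by
  set G : ℂ → ℂ := fun w => Complex.exp (-(σ : ℂ) * w) * f (I * w) * ((I * w + I) ^ d)⁻¹ with hGdef
  -- basic norm formula
  have hne : ∀ w : ℂ, 0 ≤ w.re → I * w + I ≠ 0 := by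
    intro w hw h
    have : w = -1 := by
      have := mul_left_cancel₀ I_ne_zero (show I * w = I * (-1) by rw [mul_neg_one]; linear_combination h)
      exact this
    rw [this] at hw; norm_num at hw
  have hGnorm : ∀ w : ℂ, ‖G w‖ = Real.exp (-σ * w.re) * ‖f (I * w)‖ * (‖I * w + I‖ ^ d)⁻¹ := by
    intro w
    rw [hGdef]
    simp only [norm_mul, norm_inv, norm_pow]
    congr 1
    congr 1
    rw [Complex.norm_exp]
    congr 1
    simp
  have honeLe : ∀ w : ℂ, 0 ≤ w.re → 1 ≤ ‖I * w + I‖ := by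
    intro w hw
    have : I * w + I = I * (w + 1) := by ring
    rw [this, norm_mul, Complex.norm_I, one_mul]
    calc (1 : ℝ) ≤ (w + 1).re := by simp [hw]
      _ ≤ |(w + 1).re| := le_abs_self _
      _ ≤ ‖w + 1‖ := Complex.abs_re_le_norm _
  -- bound on right half plane via Phragmen-Lindelof
  have key : ∀ w : ℂ, 0 ≤ w.re → ‖G w‖ ≤ 2 * C := by
    intro w hw
    apply PhragmenLindelof.right_half_plane_of_bounded_on_real
    · -- DiffContOnCl
      have hdiff : ∀ u : ℂ, 0 ≤ u.re → DifferentiableAt ℂ G u := by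
        intro u hu
        apply DifferentiableAt.mul
        · apply DifferentiableAt.mul
          · exact (differentiableAt_id.const_mul _).cexp
          · exact (hf _).comp u (differentiableAt_id.const_mul _)
        · exact (((differentiableAt_id.const_mul I).add_const I).pow d).inv
            (pow_ne_zero _ (hne u hu))
      constructor
      · exact fun u hu => (hdiff u (le_of_lt hu)).differentiableWithinAt
      · intro u hu
        have hu' : 0 ≤ u.re := by
          have := closure_lt_subset_le continuous_const Complex.continuous_re hu
          exact this
        exact (hdiff u hu').continuousAt.continuousWithinAt
    · -- growth
      refine ⟨1, one_lt_two, σ, ?_⟩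
      apply IsBigO.of_bound A
      rw [eventually_inf_principal]
      filter_upwards with w hw
      have hw' : (0:ℝ) ≤ w.re := le_of_lt hw
      rw [hGnorm]
      have h1 : Real.exp (-σ * w.re) ≤ 1 := by
        apply Real.exp_le_one_iff.mpr
        have : 0 ≤ σ * w.re := mul_nonneg hσ hw'
        linarith
      have h2 : ‖f (I * w)‖ ≤ A * Real.exp (σ * ‖w‖) := by
        have := htype (I * w)
        rwa [norm_mul, Complex.norm_I, one_mul] at this
      have h3 : (‖I * w + I‖ ^ d)⁻¹ ≤ 1 := by
        rw [inv_le_one_iff₀]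
        right
        exact one_le_pow₀ (honeLe w hw')
      have hnorm : ‖Real.exp (σ * ‖w‖ ^ (1:ℝ))‖ = Real.exp (σ * ‖w‖) := by
        rw [Real.norm_eq_abs, abs_of_pos (Real.exp_pos _), Real.rpow_one]
      rw [hnorm]
      calc Real.exp (-σ * w.re) * ‖f (I * w)‖ * (‖I * w + I‖ ^ d)⁻¹
          ≤ 1 * (A * Real.exp (σ * ‖w‖)) * 1 := by
            apply mul_le_mul (mul_le_mul h1 h2 (norm_nonneg _) one_pos.le) h3
            · positivity
            · positivity
        _ = A * Real.exp (σ * ‖w‖) := by ring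
    · -- bounded on real axis
      refine ⟨A, ?_⟩
      rw [Filter.eventually_map]
      filter_upwards [Filter.eventually_ge_atTop (0:ℝ)] with x hx
      rw [hGnorm]
      have h2 : ‖f (I * x)‖ ≤ A * Real.exp (σ * x) := by
        have := htype (I * x)
        rwa [norm_mul, Complex.norm_I, one_mul,
          Complex.norm_real, Real.norm_eq_abs, _root_.abs_of_nonneg hx] at this
      have h3 : (‖I * (x:ℂ) + I‖ ^ d)⁻¹ ≤ 1 := by
        rw [inv_le_one_iff₀]; right
        exact one_le_pow₀ (honeLe x (by simpa using hx))
      have hre : ((x:ℂ)).re = x := by simp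
      calc Real.exp (-σ * ((x:ℂ)).re) * ‖f (I * x)‖ * (‖I * (x:ℂ) + I‖ ^ d)⁻¹
          ≤ Real.exp (-σ * x) * (A * Real.exp (σ * x)) * 1 := by
            rw [hre]
            apply mul_le_mul (mul_le_mul le_rfl h2 (norm_nonneg _) (Real.exp_pos _).le) h3
            · positivity
            · positivity
        _ = A := by
            rw [mul_one, mul_comm A, ← mul_assoc, ← Real.exp_add,
              show -σ * x + σ * x = 0 by ring, Real.exp_zero, one_mul]
    · -- imaginary axis
      intro x
      rw [hGnorm]
      have he : Real.exp (-σ * ((x:ℂ) * I).re) = 1 := by simp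
      have hval : I * ((x:ℂ) * I) = ((-x : ℝ) : ℂ) := by
        push_cast; ring_nf; rw [Complex.I_sq]; ring
      have h2 : ‖f (I * ((x:ℂ) * I))‖ ≤ C * (1 + |x| ^ d) := by
        rw [hval]
        have := hreal (-x)
        rwa [abs_neg] at this
      have hge : |x| ≤ ‖I * ((x:ℂ) * I) + I‖ := by
        rw [hval]
        calc |x| = |(((-x:ℝ):ℂ) + I).re| := by simp
          _ ≤ ‖((-x:ℝ):ℂ) + I‖ := Complex.abs_re_le_norm _
      have hge1 : 1 ≤ ‖I * ((x:ℂ) * I) + I‖ := by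
        rw [hval]
        calc (1:ℝ) = |(((-x:ℝ):ℂ) + I).im| := by simp
          _ ≤ ‖((-x:ℝ):ℂ) + I‖ := Complex.abs_im_le_norm _
      have hsum : 1 + |x| ^ d ≤ 2 * ‖I * ((x:ℂ) * I) + I‖ ^ d := by
        have a1 : (1:ℝ) ≤ ‖I * ((x:ℂ) * I) + I‖ ^ d := one_le_pow₀ hge1
        have a2 : |x| ^ d ≤ ‖I * ((x:ℂ) * I) + I‖ ^ d := pow_le_pow_left₀ (abs_nonneg x) hge d
        linarith
      rw [he, one_mul]
      rw [mul_inv_le_iff₀ (by positivity)]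
      calc ‖f (I * ((x:ℂ) * I))‖ ≤ C * (1 + |x| ^ d) := h2
        _ ≤ C * (2 * ‖I * ((x:ℂ) * I) + I‖ ^ d) := by
            apply mul_le_mul_of_nonneg_left hsum hC.le
        _ = 2 * C * ‖I * ((x:ℂ) * I) + I‖ ^ d := by ring
    · exact hw
  -- conclude
  intro z hz
  set w : ℂ := -I * z with hw
  have hwre : 0 ≤ w.re := by simp [hw, hz]
  have hzw : I * w = z := by rw [hw]; ring_nf; rw [Complex.I_sq]; ring
  have hGz := key w hwre
  rw [hGnorm] at hGz
  have hwre2 : w.re = z.im := by simp [hw]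
  rw [hzw, hwre2] at hGz
  have hpos : (0:ℝ) < ‖z + I‖ ^ d := by
    have h1 : (1:ℝ) ≤ ‖z + I‖ := by
      calc (1:ℝ) ≤ (z + I).im := by simp; linarith
        _ ≤ |(z + I).im| := le_abs_self _
        _ ≤ ‖z + I‖ := Complex.abs_im_le_norm _
    positivity
  have hle : ‖f z‖ ≤ 2 * C * ‖z + I‖ ^ d * Real.exp (σ * z.im) := by
    have hstep : Real.exp (-σ * z.im) * ‖f z‖ ≤ 2 * C * ‖z + I‖ ^ d := by
      rwa [mul_inv_le_iff₀ hpos] at hGz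
    have hone : Real.exp (σ * z.im) * Real.exp (-σ * z.im) = 1 := by
      rw [← Real.exp_add, show σ * z.im + -σ * z.im = 0 by ring, Real.exp_zero]
    calc ‖f z‖ = Real.exp (σ * z.im) * (Real.exp (-σ * z.im) * ‖f z‖) := by
          rw [← mul_assoc, hone, one_mul]
      _ ≤ Real.exp (σ * z.im) * (2 * C * ‖z + I‖ ^ d) :=
          mul_le_mul_of_nonneg_left hstep (Real.exp_pos _).le
      _ = 2 * C * ‖z + I‖ ^ d * Real.exp (σ * z.im) := by ring
  have hzI : ‖z + I‖ ≤ 1 + ‖z‖ := by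
    calc ‖z + I‖ ≤ ‖z‖ + ‖I‖ := norm_add_le _ _
      _ = 1 + ‖z‖ := by rw [Complex.norm_I]; ring
  have hfin : ‖z + I‖ ^ d ≤ 2 ^ d * (1 + ‖z‖ ^ d) := by
    calc ‖z + I‖ ^ d ≤ (1 + ‖z‖) ^ d := pow_le_pow_left₀ (norm_nonneg _) hzI d
      _ ≤ 2 ^ d * (1 + ‖z‖ ^ d) := pow_one_add_le d (norm_nonneg z)
  calc ‖f z‖ ≤ 2 * C * ‖z + I‖ ^ d * Real.exp (σ * z.im) := hle
    _ ≤ 2 * C * (2 ^ d * (1 + ‖z‖ ^ d)) * Real.exp (σ * z.im) := by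
        apply mul_le_mul_of_nonneg_right _ (Real.exp_pos _).le
        apply mul_le_mul_of_nonneg_left hfin (by positivity)
    _ = (2 ^ d * (2 * C)) * (1 + ‖z‖ ^ d) * Real.exp (σ * z.im) := by ring

/-- Phragmén–Lindelöf (Levin, p.39), first part: an entire function of
exponential type at most `σ` which is polynomially bounded (degree `d`) on the
real axis satisfies `‖f z‖ ≤ C₁ (1 + ‖z‖^d) e^{σ |Im z|}` on all of `ℂ`. -/
theorem stmt_0 (σ : ℝ) (hσ : 0 ≤ σ) (d : ℕ) (f : ℂ → ℂ)
    (hf : Differentiable ℂ f)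
    (htype : ∃ A > 0, ∀ z : ℂ, ‖f z‖ ≤ A * Real.exp (σ * ‖z‖))
    (hreal : ∃ C > 0, ∀ x : ℝ, ‖f x‖ ≤ C * (1 + |x| ^ d)) :
    ∃ C₁ > 0, ∀ z : ℂ, ‖f z‖ ≤ C₁ * (1 + ‖z‖ ^ d) * Real.exp (σ * |z.im|) := by
  obtain ⟨A, hA, htypeA⟩ := htype
  obtain ⟨C, hC, hrealC⟩ := hreal
  refine ⟨2 ^ d * (2 * C), by positivity, ?_⟩
  intro z
  rcases le_total 0 z.im with hz | hz
  · have h := pl_upper σ hσ d f hf A hA htypeA C hC hrealC z hz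
    rwa [_root_.abs_of_nonneg hz]
  · set g : ℂ → ℂ := fun w => (starRingEnd ℂ) (f ((starRingEnd ℂ) w)) with hgdef
    have hg : Differentiable ℂ g := conj_conj_diff hf
    have hgtype : ∀ w : ℂ, ‖g w‖ ≤ A * Real.exp (σ * ‖w‖) := by
      intro w
      rw [hgdef]
      simp only [RCLike.norm_conj]
      calc ‖f ((starRingEnd ℂ) w)‖ ≤ A * Real.exp (σ * ‖(starRingEnd ℂ) w‖) := htypeA _
        _ = A * Real.exp (σ * ‖w‖) := by rw [RCLike.norm_conj]
    have hgreal : ∀ x : ℝ, ‖g x‖ ≤ C * (1 + |x| ^ d) := by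
      intro x
      rw [hgdef]
      simp only [Complex.conj_ofReal, RCLike.norm_conj]
      exact hrealC x
    have h := pl_upper σ hσ d g hg A hA hgtype C hC hgreal ((starRingEnd ℂ) z)
      (by simp; linarith)
    have h1 : ‖g ((starRingEnd ℂ) z)‖ = ‖f z‖ := by
      rw [hgdef]; simp [RCLike.norm_conj]
    have h2 : ‖(starRingEnd ℂ) z‖ = ‖z‖ := RCLike.norm_conj _
    have h3 : ((starRingEnd ℂ) z).im = |z.im| := by
      simp [_root_.abs_of_nonpos hz]
    rwa [h1, h2, h3] at h
end

section
/- Let d ∈ ℕ and let u : ℝ → ℂ be integrable with compact support. Suppose there exist coefficients a₀, …, a_d ∈ ℂ such that ∫_ℝ e^{ixt} u(t) dt = a₀ + a₁x + ⋯ + a_d x^d for every x ∈ ℝ. Then ∫_ℝ e^{ixt} t^{d+1} u(t) dt = 0 for every x ∈ ℝ, and hence t^{d+1}·u(t) = 0 for almost every t ∈ ℝ. -/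
open MeasureTheory Complex

open scoped FourierTransform Real ContDiff

/-- Iterated derivatives of a compactly supported function are compactly supported. -/
lemma aux_hcs_iteratedDeriv {f : ℝ → ℂ} (hf : HasCompactSupport f) (n : ℕ) :
    HasCompactSupport (iteratedDeriv n f) := by
  induction n with
  | zero => simpa using hf
  | succ n ih => rw [iteratedDeriv_succ]; exact ih.deriv

/-- The Fourier transform of a smooth compactly supported function is integrable. -/
lemma aux_integrable_fourier {g : ℝ → ℂ} (hg : ContDiff ℝ ∞ g)
    (hs : HasCompactSupport g) : Integrable (𝓕 g) := by
  have hder : ∀ n : ℕ, Integrable (iteratedDeriv n g) := fun n =>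
    ((hg.continuous_iteratedDeriv n (by exact_mod_cast le_top)).integrable_of_hasCompactSupport
      (aux_hcs_iteratedDeriv hs n))
  have hgint : Integrable g := by simpa using hder 0
  have h2 := Real.fourier_iteratedDeriv (N := (2 : ℕ∞)) (n := 2)
      (hg.of_le (by exact_mod_cast le_top)) (fun n _ => hder n) le_rfl
  set C0 : ℝ := ∫ x : ℝ, ‖g x‖ with hC0
  set C2 : ℝ := ∫ x : ℝ, ‖iteratedDeriv 2 g x‖ with hC2
  have bound0 : ∀ x : ℝ, ‖𝓕 g x‖ ≤ C0 := fun x =>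
    VectorFourier.norm_fourierIntegral_le_integral_norm _ _ _ _ _
  have bound2 : ∀ x : ℝ, ‖𝓕 (iteratedDeriv 2 g) x‖ ≤ C2 := fun x =>
    VectorFourier.norm_fourierIntegral_le_integral_norm _ _ _ _ _
  have key : ∀ x : ℝ, (2 * π) ^ 2 * x ^ 2 * ‖𝓕 g x‖ ≤ C2 := by
    intro x
    have hb := bound2 x
    rw [h2] at hb
    have hnorm : ‖((2 * ↑π * I * (x : ℂ)) ^ 2 : ℂ)‖ = (2 * π) ^ 2 * x ^ 2 := by
      rw [norm_pow]
      have e1 : (2 * ↑π * I * (x : ℂ)) = (((2 * π : ℝ)) : ℂ) * ((x : ℝ) : ℂ) * I := by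
        push_cast; ring
      rw [e1, norm_mul, norm_mul, Complex.norm_real, Complex.norm_real, Complex.norm_I, mul_one,
        Real.norm_eq_abs, Real.norm_eq_abs, mul_pow, _root_.sq_abs, _root_.sq_abs]
    rw [norm_smul, hnorm] at hb
    linarith [hb]
  have hπ : (0 : ℝ) < (2 * π) ^ 2 := by positivity
  set c : ℝ := C0 + C2 / (2 * π) ^ 2 with hc
  have bound : ∀ x : ℝ, ‖𝓕 g x‖ ≤ c * (1 + x ^ 2)⁻¹ := by
    intro x
    rw [← div_eq_mul_inv, le_div_iff₀ (by positivity)]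
    have h4 : x ^ 2 * ‖𝓕 g x‖ ≤ C2 / (2 * π) ^ 2 := by
      rw [le_div_iff₀ hπ]
      nlinarith [key x]
    rw [hc]
    nlinarith [bound0 x, h4]
  have hmeas : AEStronglyMeasurable (𝓕 g) volume := by
    refine Continuous.aestronglyMeasurable ?_
    exact VectorFourier.fourierIntegral_continuous Real.continuous_fourierChar
      (by exact continuous_inner) hgint
  refine (integrable_inv_one_add_sq.const_mul c).mono' hmeas ?_
  filter_upwards with x using bound x

/-- An integrable function on `ℝ` whose Fourier transform vanishes identically is a.e. zero. -/
lemma aux_ae_zero_of_fourier_zero {v : ℝ → ℂ} (hv : Integrable v)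
    (h0 : ∀ w : ℝ, 𝓕 v w = 0) : ∀ᵐ t : ℝ, v t = 0 := by
  apply ae_eq_zero_of_integral_contDiff_smul_eq_zero hv.locallyIntegrable
  intro g g_diff g_supp
  set G : ℝ → ℂ := fun x => (g x : ℂ) with hG
  have G_diff : ContDiff ℝ ∞ G := Complex.ofRealCLM.contDiff.comp g_diff
  have G_supp : HasCompactSupport G := g_supp.comp_left Complex.ofReal_zero
  have G_cont : Continuous G := G_diff.continuous
  have G_int : Integrable G := G_cont.integrable_of_hasCompactSupport G_supp
  have FG_int : Integrable (𝓕 G) := aux_integrable_fourier G_diff G_supp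
  have hGneg_diff : ContDiff ℝ ∞ (fun x : ℝ => G (-x)) := G_diff.comp contDiff_neg
  have hGneg_supp : HasCompactSupport (fun x : ℝ => G (-x)) := by
    have := G_supp.comp_homeomorph (Homeomorph.neg ℝ)
    simpa [Function.comp_def] using this
  have h₀_int : Integrable (𝓕⁻ G) := by
    rw [Real.fourierInv_eq_fourier_comp_neg]
    exact aux_integrable_fourier hGneg_diff hGneg_supp
  have h₀_fourier : 𝓕 (𝓕⁻ G) = G := G_cont.fourier_fourierInv_eq G_int FG_int
  have hflip : (innerₗ ℝ).flip = innerₗ ℝ := by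
    apply LinearMap.ext; intro x; apply LinearMap.ext; intro y
    exact real_inner_comm x y
  have mult := VectorFourier.integral_fourierIntegral_smul_eq_flip (μ := volume) (ν := volume)
      (L := innerₗ ℝ) Real.continuous_fourierChar continuous_inner hv h₀_int
  rw [hflip] at mult
  have hLHS : (∫ ξ : ℝ, (VectorFourier.fourierIntegral 𝐞 volume (innerₗ ℝ) v ξ) • (𝓕⁻ G) ξ)
      = 0 := by
    have : ∀ ξ : ℝ, (VectorFourier.fourierIntegral 𝐞 volume (innerₗ ℝ) v ξ) • (𝓕⁻ G) ξ = 0 := by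
      intro ξ
      have : VectorFourier.fourierIntegral 𝐞 volume (innerₗ ℝ) v ξ = 𝓕 v ξ := rfl
      rw [this, h0 ξ, zero_smul]
    simp only [this, integral_zero]
  have hRHS : (∫ x : ℝ, v x • VectorFourier.fourierIntegral 𝐞 volume (innerₗ ℝ) (𝓕⁻ G) x)
      = ∫ x : ℝ, v x • G x := by
    congr 1
    ext x
    have : VectorFourier.fourierIntegral 𝐞 volume (innerₗ ℝ) (𝓕⁻ G) x = 𝓕 (𝓕⁻ G) x := rfl
    rw [this, h₀_fourier]
  rw [hLHS, hRHS] at mult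
  have : (∫ x : ℝ, v x • G x) = ∫ x : ℝ, g x • v x := by
    congr 1
    ext x
    simp only [smul_eq_mul, hG, Complex.real_smul]
    ring
  rw [this] at mult
  exact mult.symm

/-- Iterated derivative of the evaluation of a complex polynomial along the real line. -/
lemma aux_iteratedDeriv_polyEval (Q : Polynomial ℂ) (n : ℕ) :
    iteratedDeriv n (fun x : ℝ => Q.eval (x : ℂ)) =
      fun x : ℝ => ((Polynomial.derivative)^[n] Q).eval (x : ℂ) := by
  induction n with
  | zero => simp
  | succ n ih =>
    rw [iteratedDeriv_succ, ih]
    ext x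
    rw [Function.iterate_succ_apply']
    exact ((((Polynomial.derivative)^[n] Q).hasDerivAt ((x : ℝ) : ℂ)).comp_ofReal).deriv

/-- Rewriting `∫ e^{ixt} f(t) dt` as a Fourier transform value. -/
lemma aux_exp_integral_eq (f : ℝ → ℂ) (x : ℝ) :
    (∫ t : ℝ, Complex.exp (Complex.I * x * t) * f t) = 𝓕 f (-(x / (2 * π))) := by
  rw [Real.fourier_real_eq_integral_exp_smul]
  congr 1
  ext t
  rw [smul_eq_mul]
  congr 1
  have harg : (-2 * π * t * -(x / (2 * π)) : ℝ) = x * t := by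
    field_simp
  rw [harg]
  push_cast
  ring_nf

/-- Equations (3.5)–(3.6): if the Fourier transform of a compactly supported
integrable `u` is a polynomial of degree at most `d` on `ℝ`, then the Fourier
transform of `t^{d+1} u(t)` vanishes identically, hence `t^{d+1} u(t) = 0`
almost everywhere. -/
theorem stmt_8 (d : ℕ) (u : ℝ → ℂ)
    (hu : Integrable u)
    (hsupp : HasCompactSupport u)
    (a : Fin (d + 1) → ℂ)
    (hpoly : ∀ x : ℝ,
      (∫ t : ℝ, Complex.exp (Complex.I * x * t) * u t) =
        ∑ i : Fin (d + 1), a i * (x : ℂ) ^ (i : ℕ)) :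
    (∀ x : ℝ, (∫ t : ℝ, Complex.exp (Complex.I * x * t) * ((t : ℂ) ^ (d + 1) * u t)) = 0) ∧
      ∀ᵐ t : ℝ, (t : ℂ) ^ (d + 1) * u t = 0 := by
  have h2π : (2 * π : ℝ) ≠ 0 := by positivity
  -- integrability of monomials times u
  have hpow : ∀ n : ℕ, Integrable (fun t : ℝ => t ^ n • u t) := by
    intro n
    obtain ⟨C, hC⟩ : ∃ C : ℝ, ∀ t ∈ tsupport u, ‖(t : ℝ) ^ n‖ ≤ C :=
      hsupp.exists_bound_of_continuousOn (continuous_pow n).continuousOn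
    refine (hu.norm.const_mul C).mono'
      ((continuous_pow n).aestronglyMeasurable.smul hu.1) ?_
    filter_upwards with t
    rw [norm_smul]
    by_cases ht : t ∈ tsupport u
    · exact mul_le_mul_of_nonneg_right (hC t ht) (norm_nonneg _)
    · rw [image_eq_zero_of_notMem_tsupport ht]
      simp
  -- the Fourier transform of u is the evaluation of a polynomial
  set P : Polynomial ℂ :=
    ∑ i : Fin (d + 1), Polynomial.C (a i * (-(2 * π)) ^ (i : ℕ)) * Polynomial.X ^ (i : ℕ)
    with hPdef
  have hP : ∀ w : ℝ, 𝓕 u w = P.eval (w : ℂ) := by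
    intro w
    have h1 := aux_exp_integral_eq u (-(2 * π * w))
    have h2 : (-(-(2 * π * w) / (2 * π)) : ℝ) = w := by field_simp
    rw [h2] at h1
    rw [← h1, hpoly (-(2 * π * w))]
    rw [hPdef]
    rw [Polynomial.eval_finset_sum]
    apply Finset.sum_congr rfl
    intro i _
    rw [Polynomial.eval_mul, Polynomial.eval_C, Polynomial.eval_pow, Polynomial.eval_X]
    push_cast
    ring
  have hdeg : P.natDegree ≤ d := by
    rw [hPdef]
    apply Polynomial.natDegree_sum_le_of_forall_le
    intro i _
    refine le_trans (Polynomial.natDegree_mul_le) ?_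
    simp only [Polynomial.natDegree_C, Polynomial.natDegree_X_pow, zero_add]
    exact Nat.lt_succ_iff.mp i.isLt
  -- the (d+1)-st derivative of the Fourier transform vanishes
  have hFu : 𝓕 u = fun w : ℝ => P.eval (w : ℂ) := funext hP
  have hzero : iteratedDeriv (d + 1) (𝓕 u) = 0 := by
    rw [hFu, aux_iteratedDeriv_polyEval]
    have : (Polynomial.derivative)^[d + 1] P = 0 :=
      Polynomial.iterate_derivative_eq_zero (Nat.lt_succ_of_le hdeg)
    simp [this]
    rfl
  have hF := Real.iteratedDeriv_fourier (f := u) (N := ((d + 1 : ℕ) : ℕ∞)) (n := d + 1)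
      (fun n _ => hpow n) le_rfl
  rw [hzero] at hF
  -- deduce the Fourier transform of t^{d+1} u vanishes
  set v : ℝ → ℂ := fun t => (t : ℂ) ^ (d + 1) * u t with hvdef
  have hv : Integrable v := by
    refine (hpow (d + 1)).congr ?_
    filter_upwards with t
    rw [hvdef]
    simp only [Complex.real_smul]
    push_cast
    ring
  set c : ℂ := (-2 * π * I) ^ (d + 1) with hcdef
  have hcne : c ≠ 0 := by
    rw [hcdef]
    apply pow_ne_zero
    simp [Real.pi_ne_zero, Complex.I_ne_zero]
  have hfun : (fun x : ℝ => (-2 * ↑π * I * (x : ℂ)) ^ (d + 1) • u x) = fun x : ℝ => c • v x := by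
    ext x
    rw [hvdef, hcdef]
    simp only [smul_eq_mul]
    ring
  have hcv : ∀ w : ℝ, 𝓕 (fun x : ℝ => c • v x) w = c • 𝓕 v w := by
    intro w
    rw [Real.fourier_real_eq, Real.fourier_real_eq, ← integral_smul]
    congr 1
    ext t
    rw [smul_comm]
  have hve : ∀ w : ℝ, 𝓕 v w = 0 := by
    intro w
    have h1 : 𝓕 (fun x : ℝ => (-2 * ↑π * I * (x : ℂ)) ^ (d + 1) • u x) w = 0 := by
      rw [← hF]
      simp
    rw [hfun, hcv] at h1
    exact (smul_eq_zero.mp h1).resolve_left hcne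
  constructor
  · intro x
    rw [show (∫ t : ℝ, Complex.exp (Complex.I * x * t) * ((t : ℂ) ^ (d + 1) * u t)) =
        ∫ t : ℝ, Complex.exp (Complex.I * x * t) * v t from rfl]
    rw [aux_exp_integral_eq v x, hve]
  · exact aux_ae_zero_of_fourier_zero hv hve
end

section
/- Let u : ℝ → ℂ be continuous with compact support. Suppose there exist d ∈ ℕ and coefficients a₀, …, a_d ∈ ℂ such that ∫_ℝ e^{ixt} u(t) dt = a₀ + a₁x + ⋯ + a_d x^d for every x ∈ ℝ. Then u(t) = 0 for every t ∈ ℝ. -/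
open MeasureTheory Complex Filter Polynomial

/-- A complex polynomial function of a real variable tending to `0` at `+∞`
vanishes identically. -/
lemma poly_tendsto_zero_eq_zero {d : ℕ} (a : Fin (d + 1) → ℂ)
    (h : Tendsto (fun x : ℝ => ∑ i : Fin (d + 1), a i * (x : ℂ) ^ (i : ℕ)) atTop (nhds 0)) :
    ∀ x : ℝ, ∑ i : Fin (d + 1), a i * (x : ℂ) ^ (i : ℕ) = 0 := by
  set p : Polynomial ℂ := ∑ i : Fin (d + 1), C (a i) * X ^ (i : ℕ) with hp
  have heval : ∀ x : ℝ, p.eval (x : ℂ) = ∑ i : Fin (d + 1), a i * (x : ℂ) ^ (i : ℕ) := by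
    intro x
    simp [hp, eval_finset_sum]
  have hdeg : ¬ (0 < p.degree) := by
    intro hd
    have hnorm : Tendsto (fun x : ℝ => ‖p.eval ((x : ℂ))‖) atTop atTop := by
      apply p.tendsto_norm_atTop hd
      have : (fun x : ℝ => ‖(x : ℂ)‖) = fun x : ℝ => |x| := by
        ext x; simp
      rw [this]
      exact tendsto_abs_atTop_atTop
    have h0 : Tendsto (fun x : ℝ => ‖p.eval ((x : ℂ))‖) atTop (nhds 0) := by
      have := h.norm
      simp only [norm_zero] at this
      refine this.congr fun x => ?_
      rw [heval]
    exact not_tendsto_nhds_of_tendsto_atTop hnorm 0 h0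
  have hC : p = C (p.coeff 0) := (Polynomial.eq_C_of_degree_le_zero (not_lt.mp hdeg))
  have hc0 : p.coeff 0 = 0 := by
    have hconst : Tendsto (fun _ : ℝ => p.coeff 0) atTop (nhds 0) := by
      refine h.congr fun x => ?_
      rw [← heval, hC]; simp
    exact tendsto_nhds_unique tendsto_const_nhds hconst
  intro x
  rw [← heval, hC, hc0]; simp

/-- Section 3 of the paper, combined: a continuous compactly supported function
whose Fourier transform is a polynomial on `ℝ` vanishes identically. -/
theorem stmt_9 (u : ℝ → ℂ)
    (hu : Continuous u)
    (hsupp : HasCompactSupport u)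
    (hpoly : ∃ (d : ℕ) (a : Fin (d + 1) → ℂ), ∀ x : ℝ,
      (∫ t : ℝ, Complex.exp (Complex.I * x * t) * u t) =
        ∑ i : Fin (d + 1), a i * (x : ℂ) ^ (i : ℕ)) :
    ∀ t : ℝ, u t = 0 := by
  obtain ⟨d, a, ha⟩ := hpoly
  have hInt : Integrable u := hu.integrable_of_hasCompactSupport hsupp
  -- relate the integral to the Fourier transform
  have key : ∀ x : ℝ, (∫ t : ℝ, Complex.exp (Complex.I * x * t) * u t)
      = FourierTransform.fourier u (-x / (2 * Real.pi)) := by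
    intro x
    rw [Real.fourier_real_eq_integral_exp_smul]
    refine integral_congr_ae (Filter.EventuallyEq.of_eq ?_)
    ext t
    rw [smul_eq_mul]
    congr 1
    congr 1
    have hpi : (Real.pi : ℝ) ≠ 0 := Real.pi_ne_zero
    push_cast
    field_simp
  -- the polynomial tends to 0 at +∞ by Riemann–Lebesgue
  have hRL : Tendsto (fun x : ℝ => ∑ i : Fin (d + 1), a i * (x : ℂ) ^ (i : ℕ))
      atTop (nhds 0) := by
    have h1 : Tendsto (fun x : ℝ => -x / (2 * Real.pi)) atTop (Filter.cocompact ℝ) := by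
      rw [cocompact_eq_atBot_atTop]
      refine Tendsto.mono_right ?_ le_sup_left
      apply Filter.Tendsto.atBot_div_const (by positivity)
      exact tendsto_neg_atTop_atBot
    have := (Real.zero_at_infty_fourier u).comp h1
    refine this.congr fun x => ?_
    simp only [Function.comp]
    rw [← key, ha]
  have hzero := poly_tendsto_zero_eq_zero a hRL
  -- hence the Fourier transform vanishes identically
  have hF : (FourierTransform.fourier u : ℝ → ℂ) = 0 := by
    ext ξ
    have := key (-(2 * Real.pi) * ξ)
    rw [ha, hzero] at this
    have hξ : -(-(2 * Real.pi) * ξ) / (2 * Real.pi) = ξ := by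
      field_simp
    rw [hξ] at this
    simpa using this.symm
  -- Fourier inversion
  have hFint : Integrable (FourierTransform.fourier u : ℝ → ℂ) := by
    rw [hF]; exact integrable_zero _ _ _
  have hinv := hu.fourierInv_fourier_eq hInt hFint
  intro t
  rw [← hinv, hF]
  simp [Real.fourierInv_eq]
end
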